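/- arXiv:1911.10475 — 4 statements merged into one kernel-verified Lean document; each statement's English description precedes it below -/
import Mathlib

section
/- If a_n > 0, ∑ a_n^{-1} < ∞, and ∑ |k_n − 1| < ∞ with k_n = a_n/√(a_{n-1} a_{n+1}), then ∑ |κ_{n+1} − κ_n| < ∞, where κ_n = √(a_{n+1}/a_n). -/
open Filter

/-- If `a_n > 0`, `∑ a_n⁻¹ < ∞` and `∑ |k_n − 1| < ∞` with `k_n = a_n/√(a_{n-1}a_{n+1})`,
then the differences of `κ_n = √(a_{n+1}/a_n)` are absolutely summable. -/
theorem kappa_diff_summable (a : ℕ → ℝ) (ha : ∀ n, 0 < a n)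
    (hsum : Summable fun n => (a n)⁻¹)
    (hk : Summable fun n => |a (n + 1) / Real.sqrt (a n * a (n + 2)) - 1|) :
    Summable fun n => |Real.sqrt (a (n + 2) / a (n + 1)) - Real.sqrt (a (n + 1) / a n)| := by
  set κ : ℕ → ℝ := fun n => Real.sqrt (a (n+1) / a n) with hκdef
  set k : ℕ → ℝ := fun n => a (n+1) / Real.sqrt (a n * a (n+2)) with hkdef
  have hs : ∀ n, (0:ℝ) < Real.sqrt (a n) := fun n => Real.sqrt_pos.mpr (ha n)
  have hκeq : ∀ n, κ n = Real.sqrt (a (n+1)) / Real.sqrt (a n) := by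
    intro n; simp [hκdef, Real.sqrt_div (ha (n+1)).le]
  have hκpos : ∀ n, 0 < κ n := by
    intro n; rw [hκeq]; exact div_pos (hs _) (hs _)
  have hkpos : ∀ n, 0 < k n := by
    intro n
    exact div_pos (ha (n+1)) (Real.sqrt_pos.mpr (mul_pos (ha n) (ha (n+2))))
  have hid : ∀ n, κ (n+1) = κ n / k n := by
    intro n
    have hq : (κ n / k n)^2 = a (n+2) / a (n+1) := by
      rw [div_pow, hκeq, hkdef]
      rw [div_pow, div_pow, Real.sq_sqrt (ha (n+1)).le, Real.sq_sqrt (ha n).le,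
          Real.sq_sqrt (mul_pos (ha n) (ha (n+2))).le]
      field_simp [(ha n).ne', (ha (n+1)).ne', (ha (n+2)).ne']
    have h2 : κ (n+1) = Real.sqrt ((κ n / k n)^2) := by rw [hq]
    rw [h2, Real.sqrt_sq (div_pos (hκpos n) (hkpos n)).le]
  -- k n → 1 eventually, so eventually k n > 1/2
  have htend : Tendsto (fun n => |k n - 1|) atTop (nhds 0) := hk.tendsto_atTop_zero
  obtain ⟨N, hN⟩ := (htend.eventually (eventually_lt_nhds (by norm_num : (0:ℝ) < 1/2))).exists_forall_of_atTop
  have hk2 : ∀ n, N ≤ n → (1:ℝ)/2 < k n := by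
    intro n hn
    have := hN n hn
    have := abs_lt.mp this
    linarith [this.1]
  -- 1/k n ≤ 1 + 2|k n - 1| for n ≥ N
  have hinv : ∀ n, N ≤ n → 1 / k n ≤ 1 + 2 * |k n - 1| := by
    intro n hn
    have hpos := hkpos n
    have h2 := hk2 n hn
    rw [div_le_iff₀ hpos]
    rcases le_or_gt 1 (k n) with h | h
    · rw [abs_of_nonneg (by linarith)]; nlinarith
    · rw [abs_of_neg (by linarith)]; nlinarith
  set T : ℝ := ∑' n, |k n - 1| with hT
  set C : ℝ := κ N * Real.exp (2 * T) with hC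
  have hCpos : 0 < C := mul_pos (hκpos N) (Real.exp_pos _)
  -- bound κ n for n ≥ N
  have hbd : ∀ m : ℕ, κ (N + m) ≤ κ N * Real.exp (2 * ∑ j ∈ Finset.range m, |k (N + j) - 1|) := by
    intro m
    induction m with
    | zero => simp
    | succ m ih =>
      have hidm := hid (N + m)
      have hle1 : 1 / k (N + m) ≤ 1 + 2 * |k (N + m) - 1| := hinv _ (Nat.le_add_right _ _)
      have hle2 : (1:ℝ) + 2 * |k (N + m) - 1| ≤ Real.exp (2 * |k (N + m) - 1|) := by
        have := Real.add_one_le_exp (2 * |k (N + m) - 1|)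
        linarith
      have hκm := hκpos (N + m)
      calc κ (N + (m+1)) = κ (N + m) * (1 / k (N + m)) := by
            rw [show N + (m+1) = (N + m) + 1 from rfl, hidm]; ring
        _ ≤ κ (N + m) * Real.exp (2 * |k (N + m) - 1|) := by
            apply mul_le_mul_of_nonneg_left (hle1.trans hle2) hκm.le
        _ ≤ (κ N * Real.exp (2 * ∑ j ∈ Finset.range m, |k (N + j) - 1|)) *
              Real.exp (2 * |k (N + m) - 1|) := by
            apply mul_le_mul_of_nonneg_right ih (Real.exp_pos _).le
        _ = κ N * Real.exp (2 * ∑ j ∈ Finset.range (m+1), |k (N + j) - 1|) := by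
            rw [Finset.sum_range_succ, mul_add, Real.exp_add, ← mul_assoc]
  have hκbd : ∀ n, N ≤ n → κ n ≤ C := by
    intro n hn
    obtain ⟨m, rfl⟩ := Nat.exists_eq_add_of_le hn
    refine (hbd m).trans ?_
    rw [hC]
    apply mul_le_mul_of_nonneg_left _ (hκpos N).le
    apply Real.exp_le_exp.mpr
    have hsle : ∑ j ∈ Finset.range m, |k (N + j) - 1| ≤ T := by
      rw [hT]
      have := Summable.sum_le_tsum (f := fun n => |k n - 1|) ((Finset.range m).image (fun j => N + j))
        (fun i _ => abs_nonneg _) hk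
      refine le_trans (le_of_eq ?_) this
      rw [Finset.sum_image (by intro x _ y _ h; simp only at h; omega)]
    linarith
  -- final comparison
  have hterm : ∀ n, N ≤ n → |κ (n+1) - κ n| ≤ 2 * C * |k n - 1| := by
    intro n hn
    rw [hid n]
    have hkp := hkpos n
    have h2 := hk2 n hn
    have : κ n / k n - κ n = κ n * ((1 - k n) / k n) := by field_simp
    rw [this, abs_mul, abs_div, abs_of_pos (hκpos n), abs_of_pos hkp]
    have hb := hκbd n hn
    have h1 : |1 - k n| / k n ≤ 2 * |k n - 1| := by
      rw [div_le_iff₀ hkp, abs_sub_comm]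
      nlinarith [abs_nonneg (k n - 1)]
    calc κ n * (|1 - k n| / k n) ≤ C * (2 * |k n - 1|) :=
          mul_le_mul hb h1 (by positivity) hCpos.le
      _ = 2 * C * |k n - 1| := by ring
  -- conclude summability
  have hshift : Summable (fun n => |κ (n + N + 1) - κ (n + N)|) := by
    apply Summable.of_nonneg_of_le (fun n => abs_nonneg _)
      (fun n => hterm (n + N) (Nat.le_add_left _ _))
    exact ((summable_nat_add_iff (f := fun n => 2 * C * |k n - 1|) N).mpr (hk.mul_left (2 * C)))
  have hsummable : Summable fun n => |κ (n+1) - κ n| :=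
    (summable_nat_add_iff (f := fun n => |κ (n+1) - κ n|) N).mp hshift
  exact hsummable
end

section
/- Let β_n be a real sequence with |1 − β_n²| ≥ c > 0 for all large n, and define ζ_n = β_n − i√(1−β_n²) if |β_n| ≤ 1 and ζ_n = sgn(β_n)(|β_n| − √(β_n²−1)) if |β_n| > 1 (with all β_n eventually on the same side of 1 in absolute value). Then |ζ_{n-1}^{-1} − ζ_n^{-1}| ≤ C |β_{n-1} − β_n| for large n, with a constant C depending only on c. -/
lemma sqrt_diff_le {c x y : ℝ} (hc : 0 < c) (hx : c ≤ x) (hy : c ≤ y) :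
    |Real.sqrt x - Real.sqrt y| ≤ |x - y| / (2 * Real.sqrt c) := by
  have hsc : 0 < Real.sqrt c := Real.sqrt_pos.2 hc
  have hx0 : (0:ℝ) ≤ x := le_trans hc.le hx
  have hy0 : (0:ℝ) ≤ y := le_trans hc.le hy
  have hsx : Real.sqrt c ≤ Real.sqrt x := Real.sqrt_le_sqrt hx
  have hsy : Real.sqrt c ≤ Real.sqrt y := Real.sqrt_le_sqrt hy
  have hsum : 0 < Real.sqrt x + Real.sqrt y := by linarith
  rw [le_div_iff₀ (by linarith)]
  have key : |Real.sqrt x - Real.sqrt y| * (Real.sqrt x + Real.sqrt y) = |x - y| := by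
    rw [← abs_of_nonneg hsum.le, ← abs_mul]
    congr 1
    have := Real.sq_sqrt hx0
    have := Real.sq_sqrt hy0
    nlinarith
  calc |Real.sqrt x - Real.sqrt y| * (2 * Real.sqrt c)
      ≤ |Real.sqrt x - Real.sqrt y| * (Real.sqrt x + Real.sqrt y) := by
        apply mul_le_mul_of_nonneg_left (by linarith) (abs_nonneg _)
    _ = |x - y| := key

lemma inv_case1 (a : ℝ) (ha : a ^ 2 ≤ 1) :
    ((a : ℂ) - Complex.I * Real.sqrt (1 - a ^ 2))⁻¹ = (a : ℂ) + Complex.I * Real.sqrt (1 - a ^ 2) := by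
  apply inv_eq_of_mul_eq_one_right
  have hq : ((Real.sqrt (1 - a ^ 2) : ℝ) : ℂ) ^ 2 = ((1 - a ^ 2 : ℝ) : ℂ) := by
    rw [← Complex.ofReal_pow, Real.sq_sqrt (by linarith)]
  push_cast at hq ⊢
  linear_combination (-(((Real.sqrt (1 - a ^ 2) : ℝ) : ℂ)) ^ 2) * Complex.I_sq + hq

lemma inv_case2 (a : ℝ) (ha : 1 < |a|) :
    (Real.sign a * (|a| - Real.sqrt (a ^ 2 - 1)))⁻¹ = a + Real.sign a * Real.sqrt (a ^ 2 - 1) := by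
  have h1 : (1:ℝ) < a ^ 2 := by nlinarith [abs_nonneg a, sq_abs a]
  have hq : Real.sqrt (a ^ 2 - 1) ^ 2 = a ^ 2 - 1 := Real.sq_sqrt (by linarith)
  have hq0 : 0 ≤ Real.sqrt (a ^ 2 - 1) := Real.sqrt_nonneg _
  rcases lt_or_gt_of_ne (show a ≠ 0 by intro h; rw [h] at ha; norm_num at ha) with hneg | hpos
  · rw [Real.sign_of_neg hneg, abs_of_neg hneg]
    apply inv_eq_of_mul_eq_one_right
    nlinarith
  · rw [Real.sign_of_pos hpos, abs_of_pos hpos]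
    apply inv_eq_of_mul_eq_one_right
    nlinarith

lemma qdiff1 {c a b : ℝ} (hc : 0 < c) (hca : c ≤ 1 - a ^ 2) (hcb : c ≤ 1 - b ^ 2)
    (ha : |a| ≤ 1) (hb : |b| ≤ 1) :
    |Real.sqrt (1 - a ^ 2) - Real.sqrt (1 - b ^ 2)| ≤ (1 / Real.sqrt c) * |a - b| := by
  have hsc : 0 < Real.sqrt c := Real.sqrt_pos.2 hc
  have h0 := sqrt_diff_le hc hca hcb
  have h3 : |(1 - a ^ 2) - (1 - b ^ 2)| ≤ 2 * |a - b| := by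
    have he : (1 - a ^ 2) - (1 - b ^ 2) = (b - a) * (b + a) := by ring
    rw [he, abs_mul]
    have h4 : |b + a| ≤ 2 := by
      calc |b + a| ≤ |b| + |a| := abs_add_le _ _
        _ ≤ 2 := by linarith
    calc |b - a| * |b + a| ≤ |b - a| * 2 := by
          exact mul_le_mul_of_nonneg_left h4 (abs_nonneg _)
      _ = 2 * |a - b| := by rw [abs_sub_comm]; ring
  calc |Real.sqrt (1 - a ^ 2) - Real.sqrt (1 - b ^ 2)|
      ≤ |(1 - a ^ 2) - (1 - b ^ 2)| / (2 * Real.sqrt c) := h0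
    _ ≤ (2 * |a - b|) / (2 * Real.sqrt c) := by gcongr
    _ = (1 / Real.sqrt c) * |a - b| := by
        rw [mul_div_mul_left _ _ (two_ne_zero), div_eq_mul_one_div, mul_comm]

lemma qdiff2 {c a b : ℝ} (hc : 0 < c) (hca : c ≤ a ^ 2 - 1) (hcb : c ≤ b ^ 2 - 1) :
    |Real.sqrt (a ^ 2 - 1) - Real.sqrt (b ^ 2 - 1)| ≤ (1 + 1 / Real.sqrt c) * |a - b| := by
  have hsc : 0 < Real.sqrt c := Real.sqrt_pos.2 hc
  set qa := Real.sqrt (a ^ 2 - 1) with hqadef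
  set qb := Real.sqrt (b ^ 2 - 1) with hqbdef
  have hqa2 : qa ^ 2 = a ^ 2 - 1 := Real.sq_sqrt (by linarith)
  have hqb2 : qb ^ 2 = b ^ 2 - 1 := Real.sq_sqrt (by linarith)
  have hqa0 : 0 ≤ qa := Real.sqrt_nonneg _
  have hqb0 : 0 ≤ qb := Real.sqrt_nonneg _
  have hqac : Real.sqrt c ≤ qa := Real.sqrt_le_sqrt hca
  have hqbc : Real.sqrt c ≤ qb := Real.sqrt_le_sqrt hcb
  have hD : 0 < qa + qb := by linarith
  have key : |qa - qb| * (qa + qb) = |a + b| * |a - b| := by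
    rw [← abs_of_nonneg hD.le, ← abs_mul]
    rw [show (qa - qb) * (qa + qb) = (a + b) * (a - b) by
      linear_combination hqa2 - hqb2]
    rw [abs_mul]
  have hA : |a| ≤ qa + 1 := by nlinarith [sq_abs a, abs_nonneg a]
  have hB : |b| ≤ qb + 1 := by nlinarith [sq_abs b, abs_nonneg b]
  have habd : |a + b| ≤ (qa + qb) + 2 := by
    calc |a + b| ≤ |a| + |b| := abs_add_le _ _
      _ ≤ _ := by linarith
  rw [← mul_le_mul_iff_of_pos_right hD, key]
  have ht : (0:ℝ) ≤ 1 / Real.sqrt c := by positivity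
  have h1 : Real.sqrt c * (1 / Real.sqrt c) = 1 := by field_simp
  have hDc : (0:ℝ) ≤ (qa + qb) - 2 * Real.sqrt c := by linarith
  calc |a + b| * |a - b| ≤ ((qa + qb) + 2) * |a - b| :=
        mul_le_mul_of_nonneg_right habd (abs_nonneg _)
    _ ≤ (1 + 1 / Real.sqrt c) * |a - b| * (qa + qb) := by
        nlinarith [mul_nonneg (mul_nonneg (abs_nonneg (a - b)) hDc) ht,
          mul_nonneg (abs_nonneg (a - b)) hDc, abs_nonneg (a - b), h1]

lemma sgn_qdiff2 {c a b : ℝ} (hc : 0 < c) (ha : 1 < |a|) (hb : 1 < |b|)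
    (hca : c ≤ a ^ 2 - 1) (hcb : c ≤ b ^ 2 - 1) :
    |Real.sign a * Real.sqrt (a ^ 2 - 1) - Real.sign b * Real.sqrt (b ^ 2 - 1)|
      ≤ (1 + 1 / Real.sqrt c) * |a - b| := by
  have hsc : 0 < Real.sqrt c := Real.sqrt_pos.2 hc
  have ht : (0:ℝ) ≤ 1 / Real.sqrt c := by positivity
  have ha0 : a ≠ 0 := by intro h; rw [h] at ha; norm_num at ha
  have hb0 : b ≠ 0 := by intro h; rw [h] at hb; norm_num at hb
  have hqa : Real.sqrt (a ^ 2 - 1) ≤ |a| := by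
    rw [← Real.sqrt_sq_eq_abs]; exact Real.sqrt_le_sqrt (by linarith)
  have hqb : Real.sqrt (b ^ 2 - 1) ≤ |b| := by
    rw [← Real.sqrt_sq_eq_abs]; exact Real.sqrt_le_sqrt (by linarith)
  have hqa0 : 0 ≤ Real.sqrt (a ^ 2 - 1) := Real.sqrt_nonneg _
  have hqb0 : 0 ≤ Real.sqrt (b ^ 2 - 1) := Real.sqrt_nonneg _
  have hmain := qdiff2 hc hca hcb
  rcases lt_or_gt_of_ne ha0 with haneg | hapos <;> rcases lt_or_gt_of_ne hb0 with hbneg | hbpos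
  · rw [Real.sign_of_neg haneg, Real.sign_of_neg hbneg]
    calc |(-1) * Real.sqrt (a ^ 2 - 1) - (-1) * Real.sqrt (b ^ 2 - 1)|
        = |Real.sqrt (a ^ 2 - 1) - Real.sqrt (b ^ 2 - 1)| := by
          rw [show (-1:ℝ) * Real.sqrt (a ^ 2 - 1) - (-1) * Real.sqrt (b ^ 2 - 1)
            = -(Real.sqrt (a ^ 2 - 1) - Real.sqrt (b ^ 2 - 1)) by ring, abs_neg]
      _ ≤ _ := hmain
  · rw [Real.sign_of_neg haneg, Real.sign_of_pos hbpos]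
    rw [abs_of_neg haneg] at hqa
    rw [abs_of_pos hbpos] at hqb
    rw [show (-1:ℝ) * Real.sqrt (a ^ 2 - 1) - 1 * Real.sqrt (b ^ 2 - 1)
      = -(Real.sqrt (a ^ 2 - 1) + Real.sqrt (b ^ 2 - 1)) by ring, abs_neg,
      abs_of_nonneg (by linarith), abs_of_neg (show a - b < 0 by linarith)]
    nlinarith [mul_nonneg ht (show (0:ℝ) ≤ b - a by linarith)]
  · rw [Real.sign_of_pos hapos, Real.sign_of_neg hbneg]
    rw [abs_of_pos hapos] at hqa
    rw [abs_of_neg hbneg] at hqb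
    rw [show (1:ℝ) * Real.sqrt (a ^ 2 - 1) - (-1) * Real.sqrt (b ^ 2 - 1)
      = Real.sqrt (a ^ 2 - 1) + Real.sqrt (b ^ 2 - 1) by ring,
      abs_of_nonneg (by linarith), abs_of_pos (show 0 < a - b by linarith)]
    nlinarith [mul_nonneg ht (show (0:ℝ) ≤ a - b by linarith)]
  · rw [Real.sign_of_pos hapos, Real.sign_of_pos hbpos]
    calc |1 * Real.sqrt (a ^ 2 - 1) - 1 * Real.sqrt (b ^ 2 - 1)|
        = |Real.sqrt (a ^ 2 - 1) - Real.sqrt (b ^ 2 - 1)| := by norm_num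
      _ ≤ _ := hmain

noncomputable section

/-- The branch `ζ_n` (with `|ζ_n| ≤ 1`) of the solutions of `ζ + ζ⁻¹ = 2 β_n`. -/
def zetaSeq (β : ℕ → ℝ) (n : ℕ) : ℂ :=
  if |β n| ≤ 1 then (β n : ℂ) - Complex.I * Real.sqrt (1 - (β n) ^ 2)
  else (Real.sign (β n) * (|β n| - Real.sqrt ((β n) ^ 2 - 1)) : ℝ)

/-- If `|1 − β_n²| ≥ c > 0` for `n ≥ N` and all `β_n`, `n ≥ N`, lie on the same side of `1`
in absolute value, then `|ζ_{n-1}⁻¹ − ζ_n⁻¹| ≤ C |β_{n-1} − β_n|` for `n ≥ N + 1`, with a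
constant `C` depending only on `c`. -/
theorem zeta_inv_diff_bound (c : ℝ) (hc : 0 < c) :
    ∃ C : ℝ, 0 < C ∧ ∀ (β : ℕ → ℝ) (N : ℕ),
      (∀ n, N ≤ n → c ≤ |1 - (β n) ^ 2|) →
      ((∀ n, N ≤ n → |β n| ≤ 1) ∨ (∀ n, N ≤ n → 1 < |β n|)) →
      ∀ n, N + 1 ≤ n →
        ‖(zetaSeq β (n - 1))⁻¹ - (zetaSeq β n)⁻¹‖ ≤ C * |β (n - 1) - β n| := by
  have hsc : 0 < Real.sqrt c := Real.sqrt_pos.2 hc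
  have ht : (0:ℝ) ≤ 1 / Real.sqrt c := by positivity
  refine ⟨2 + 2 / Real.sqrt c, by positivity, ?_⟩
  intro β N h1 hside n hn
  have hm : N ≤ n - 1 := by omega
  have hn' : N ≤ n := by omega
  set a := β (n - 1) with hadef
  set b := β n with hbdef
  have habs : (0:ℝ) ≤ |a - b| := abs_nonneg _
  rcases hside with hle | hgt
  · have haa : |a| ≤ 1 := hle _ hm
    have hbb : |b| ≤ 1 := hle _ hn'
    have ha2 : a ^ 2 ≤ 1 := by nlinarith [sq_abs a, abs_nonneg a]
    have hb2 : b ^ 2 ≤ 1 := by nlinarith [sq_abs b, abs_nonneg b]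
    have hca : c ≤ 1 - a ^ 2 := by
      have h := h1 _ hm; rwa [abs_of_nonneg (by linarith)] at h
    have hcb : c ≤ 1 - b ^ 2 := by
      have h := h1 _ hn'; rwa [abs_of_nonneg (by linarith)] at h
    have e1 : zetaSeq β (n - 1) = (a : ℂ) - Complex.I * Real.sqrt (1 - a ^ 2) := by
      rw [zetaSeq, if_pos haa]
    have e2 : zetaSeq β n = (b : ℂ) - Complex.I * Real.sqrt (1 - b ^ 2) := by
      rw [zetaSeq, if_pos hbb]
    rw [e1, e2, inv_case1 a ha2, inv_case1 b hb2]
    have e3 : ((a : ℂ) + Complex.I * Real.sqrt (1 - a ^ 2))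
        - ((b : ℂ) + Complex.I * Real.sqrt (1 - b ^ 2))
        = ((a - b : ℝ) : ℂ)
          + Complex.I * ((Real.sqrt (1 - a ^ 2) - Real.sqrt (1 - b ^ 2) : ℝ) : ℂ) := by
      push_cast; ring
    rw [e3]
    have hq := qdiff1 hc hca hcb haa hbb
    calc ‖((a - b : ℝ) : ℂ)
          + Complex.I * ((Real.sqrt (1 - a ^ 2) - Real.sqrt (1 - b ^ 2) : ℝ) : ℂ)‖
        ≤ ‖((a - b : ℝ) : ℂ)‖
          + ‖Complex.I * ((Real.sqrt (1 - a ^ 2) - Real.sqrt (1 - b ^ 2) : ℝ) : ℂ)‖ :=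
          norm_add_le _ _
      _ = |a - b| + |Real.sqrt (1 - a ^ 2) - Real.sqrt (1 - b ^ 2)| := by
          rw [norm_mul, Complex.norm_I, one_mul, Complex.norm_real, Complex.norm_real,
            Real.norm_eq_abs, Real.norm_eq_abs]
      _ ≤ |a - b| + (1 / Real.sqrt c) * |a - b| := by linarith
      _ ≤ (2 + 2 / Real.sqrt c) * |a - b| := by
          have h5 : (2 + 2 / Real.sqrt c) * |a - b|
              = 2 * |a - b| + 2 * (1 / Real.sqrt c * |a - b|) := by ring
          rw [h5]; nlinarith [mul_nonneg ht habs]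
  · have haa : 1 < |a| := hgt _ hm
    have hbb : 1 < |b| := hgt _ hn'
    have ha2 : 1 < a ^ 2 := by nlinarith [sq_abs a, abs_nonneg a]
    have hb2 : 1 < b ^ 2 := by nlinarith [sq_abs b, abs_nonneg b]
    have hca : c ≤ a ^ 2 - 1 := by
      have h := h1 _ hm; rwa [abs_of_nonpos (by linarith), neg_sub] at h
    have hcb : c ≤ b ^ 2 - 1 := by
      have h := h1 _ hn'; rwa [abs_of_nonpos (by linarith), neg_sub] at h
    have e1 : zetaSeq β (n - 1)
        = ((Real.sign a * (|a| - Real.sqrt (a ^ 2 - 1)) : ℝ) : ℂ) := by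
      rw [zetaSeq, if_neg (not_le.2 haa)]
    have e2 : zetaSeq β n = ((Real.sign b * (|b| - Real.sqrt (b ^ 2 - 1)) : ℝ) : ℂ) := by
      rw [zetaSeq, if_neg (not_le.2 hbb)]
    rw [e1, e2, ← Complex.ofReal_inv, ← Complex.ofReal_inv, ← Complex.ofReal_sub,
      Complex.norm_real, Real.norm_eq_abs, inv_case2 a haa, inv_case2 b hbb]
    have hq := sgn_qdiff2 hc haa hbb hca hcb
    calc |(a + Real.sign a * Real.sqrt (a ^ 2 - 1))
          - (b + Real.sign b * Real.sqrt (b ^ 2 - 1))|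
        ≤ |a - b| + |Real.sign a * Real.sqrt (a ^ 2 - 1)
            - Real.sign b * Real.sqrt (b ^ 2 - 1)| := by
          rw [show (a + Real.sign a * Real.sqrt (a ^ 2 - 1))
            - (b + Real.sign b * Real.sqrt (b ^ 2 - 1))
            = (a - b) + (Real.sign a * Real.sqrt (a ^ 2 - 1)
              - Real.sign b * Real.sqrt (b ^ 2 - 1)) by ring]
          exact abs_add_le _ _
      _ ≤ |a - b| + (1 + 1 / Real.sqrt c) * |a - b| := by linarith
      _ ≤ (2 + 2 / Real.sqrt c) * |a - b| := by
          have h5 : (2 + 2 / Real.sqrt c) * |a - b|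
              = 2 * |a - b| + 2 * (1 / Real.sqrt c * |a - b|) := by ring
          have h6 : (1 + 1 / Real.sqrt c) * |a - b|
              = |a - b| + 1 / Real.sqrt c * |a - b| := by ring
          rw [h5]; rw [h6] at *; nlinarith [mul_nonneg ht habs]
end
end

section
/- Let f_n = Q_n u_n where Q_{n+1}/Q_n = √(a_n/a_{n+1}) ζ_n with ζ_{n} + ζ_n^{-1} = 2β_n, α_n = 1/(2√(a_{n-1}a_n)), β_n = −b_n/(2√(a_{n-1}a_n)), and k_n = a_n/√(a_{n-1}a_{n+1}). Then f satisfies the Jacobi equation a_{n-1}f_{n-1} + (b_n − z) f_n + a_n f_{n+1} = 0 if and only if u satisfies k_n ζ_n (u_{n+1} − u_n) − ζ_{n-1}^{-1}(u_n − u_{n-1}) = −r_n u_n, where r_n = (ζ_{n-1}^{-1} − ζ_n^{-1}) + (k_n − 1)ζ_n − 2 z α_n. -/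
open Finset

noncomputable section

/-- `α_n = 1/(2√(a_{n-1}a_n))`. -/
def alphaSeq (a : ℕ → ℝ) (n : ℕ) : ℝ := 1 / (2 * Real.sqrt (a (n - 1) * a n))

/-- `β_n = −b_n/(2√(a_{n-1}a_n))`. -/
def betaSeq (a b : ℕ → ℝ) (n : ℕ) : ℝ := -b n / (2 * Real.sqrt (a (n - 1) * a n))

/-- `k_n = a_n/√(a_{n-1}a_{n+1})`. -/
def kSeq (a : ℕ → ℝ) (n : ℕ) : ℝ := a n / Real.sqrt (a (n - 1) * a (n + 1))

/-- The Ansatz `Q_n = a_n^{-1/2} ζ_0 ⋯ ζ_{n-1}`, so that `Q_{n+1}/Q_n = √(a_n/a_{n+1}) ζ_n`. -/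
def QSeq (a : ℕ → ℝ) (ζ : ℕ → ℂ) (n : ℕ) : ℂ :=
  ((Real.sqrt (a n) : ℂ))⁻¹ * ∏ m ∈ Finset.range n, ζ m

/-- The remainder `r_n = (ζ_{n-1}⁻¹ − ζ_n⁻¹) + (k_n − 1)ζ_n − 2 z α_n`. -/
def rSeq (a : ℕ → ℝ) (ζ : ℕ → ℂ) (z : ℂ) (n : ℕ) : ℂ :=
  ((ζ (n - 1))⁻¹ - (ζ n)⁻¹) + ((kSeq a n : ℝ) - 1 : ℂ) * ζ n - 2 * z * (alphaSeq a n : ℝ)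

/-- Multiplicative substitution: with `f_n = Q_n u_n` and `ζ_n + ζ_n⁻¹ = 2β_n`, the Jacobi
equation `a_{n-1}f_{n-1} + (b_n − z) f_n + a_n f_{n+1} = 0` at `n` is equivalent to
`k_n ζ_n (u_{n+1} − u_n) − ζ_{n-1}⁻¹(u_n − u_{n-1}) = −r_n u_n`. -/
theorem multiplicative_substitution (a b : ℕ → ℝ) (z : ℂ) (ζ : ℕ → ℂ) (f u : ℕ → ℂ) (n : ℕ)
    (hn : 1 ≤ n) (ha : ∀ m, 0 < a m) (hζ0 : ∀ m, ζ m ≠ 0)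
    (hζ : ζ n + (ζ n)⁻¹ = 2 * (betaSeq a b n : ℝ))
    (hu : ∀ m, f m = QSeq a ζ m * u m) :
    ((a (n - 1) : ℂ) * f (n - 1) + ((b n : ℂ) - z) * f n + (a n : ℂ) * f (n + 1) = 0) ↔
      ((kSeq a n : ℝ) : ℂ) * ζ n * (u (n + 1) - u n) - (ζ (n - 1))⁻¹ * (u n - u (n - 1)) =
        -(rSeq a ζ z n) * u n := by
  obtain ⟨m, rfl⟩ : ∃ m, n = m + 1 := ⟨n - 1, (Nat.succ_pred_eq_of_pos hn).symm⟩
  have hs : ∀ i, (Real.sqrt (a i) : ℂ) ≠ 0 := fun i => by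
    exact_mod_cast (Real.sqrt_pos.2 (ha i)).ne'
  have hP : (∏ i ∈ Finset.range m, ζ i) ≠ 0 := Finset.prod_ne_zero_iff.2 fun i _ => hζ0 i
  have hsq : ∀ i j, Real.sqrt (a i * a j) = Real.sqrt (a i) * Real.sqrt (a j) := fun i j =>
    Real.sqrt_mul (ha i).le _
  have hak : ∀ i, (a i : ℂ) = (Real.sqrt (a i) : ℂ) * (Real.sqrt (a i) : ℂ) := fun i => by
    exact_mod_cast congrArg Complex.ofReal (Real.mul_self_sqrt (ha i).le).symm
  have hb : (b (m + 1) : ℂ) =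
      -((Real.sqrt (a m) : ℂ) * (Real.sqrt (a (m + 1)) : ℂ)) * (ζ (m + 1) + (ζ (m + 1))⁻¹) := by
    rw [hζ, betaSeq]
    simp only [Nat.add_sub_cancel, hsq]
    push_cast
    field_simp [hs]
  have hc : (Real.sqrt (a m) : ℂ) * (∏ i ∈ Finset.range m, ζ i) * ζ m ≠ 0 :=
    mul_ne_zero (mul_ne_zero (hs m) hP) (hζ0 m)
  have key : (a m : ℂ) * f m + ((b (m + 1) : ℂ) - z) * f (m + 1) + (a (m + 1) : ℂ) * f (m + 2) =
      ((Real.sqrt (a m) : ℂ) * (∏ i ∈ Finset.range m, ζ i) * ζ m) *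
        ((((kSeq a (m + 1) : ℝ) : ℂ) * ζ (m + 1) * (u (m + 2) - u (m + 1)) -
          (ζ m)⁻¹ * (u (m + 1) - u m)) - -(rSeq a ζ z (m + 1)) * u (m + 1)) := by
    simp only [hu, QSeq, rSeq, kSeq, alphaSeq, Nat.add_sub_cancel, Finset.prod_range_succ, hsq, hb]
    push_cast
    rw [hak m, hak (m + 1)]
    have e0 := mul_inv_cancel₀ (hs m)
    have e1 := mul_inv_cancel₀ (hs (m + 1))
    have g0 := mul_inv_cancel₀ (hζ0 m)
    linear_combination
      (-((Real.sqrt (a (m + 1)) : ℂ) ^ 2 * ((Real.sqrt (a (m + 2)) : ℂ))⁻¹ *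
            (∏ i ∈ Finset.range m, ζ i) * ζ m * ζ (m + 1) * u (m + 2)) +
          (Real.sqrt (a m) : ℂ) * (∏ i ∈ Finset.range m, ζ i) * u m +
          z * ((Real.sqrt (a (m + 1)) : ℂ))⁻¹ * (∏ i ∈ Finset.range m, ζ i) * ζ m * u (m + 1)) * e0
        + (-((Real.sqrt (a m) : ℂ) * (∏ i ∈ Finset.range m, ζ i) * ζ m * ζ (m + 1) * u (m + 1)) -
            (Real.sqrt (a m) : ℂ) * (∏ i ∈ Finset.range m, ζ i) * ζ m * (ζ (m + 1))⁻¹ *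
              u (m + 1)) * e1
        + (-((Real.sqrt (a m) : ℂ) * (∏ i ∈ Finset.range m, ζ i) * u m)) * g0
  simp only [Nat.add_sub_cancel, show m + 1 + 1 = m + 2 from rfl]
  rw [key, mul_eq_zero, or_iff_right hc, sub_eq_zero]
end
end

section
/- Let f_n(z) = Q_n u_n(z) solve the Jacobi equation, where Q_n ≠ 0, and suppose there are constants C_n and a sequence ε_m → 0 with |u_m(z)| ≤ 2 e^{ε_m |z|} for all m and z ∈ ℂ, and |u_n(z)| ≤ C_n (1+|z|)(|u_{n+1}(z)| + |u_{n+2}(z)|) from the recurrence. Then each u_n is of minimal exponential type: for every ε > 0 there is C_n(ε) with |u_n(z)| ≤ C_n(ε) e^{ε|z|} for all z ∈ ℂ. -/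
open Filter

/-- Polynomial times exponential bound: `(1+t)^d ≤ (1+d/c)^d e^{ct}` for `t ≥ 0`, `c > 0`. -/
lemma aux_poly_exp (c : ℝ) (hc : 0 < c) (d : ℕ) (t : ℝ) (ht : 0 ≤ t) :
    (1 + t) ^ d ≤ (1 + d / c) ^ d * Real.exp (c * t) := by
  rcases Nat.eq_zero_or_pos d with hd | hd
  · subst hd
    simpa using Real.one_le_exp (by positivity)
  · have hd' : (0 : ℝ) < d := by exact_mod_cast hd
    have h1 : 1 + t ≤ (1 + d / c) * Real.exp (c / d * t) := by
      have he : 1 + c / d * t ≤ Real.exp (c / d * t) := by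
        have := Real.add_one_le_exp (c / d * t); linarith
      have hpos : (0 : ℝ) ≤ d / c := by positivity
      have hpos2 : (0 : ℝ) ≤ c / d * t := by positivity
      have : (1 + d / c) * (1 + c / d * t) ≥ 1 + t := by
        have : d / c * (c / d * t) = t := by field_simp
        nlinarith [mul_nonneg hpos hpos2]
      calc 1 + t ≤ (1 + d / c) * (1 + c / d * t) := this
        _ ≤ (1 + d / c) * Real.exp (c / d * t) := by
            apply mul_le_mul_of_nonneg_left he (by positivity)
    calc (1 + t) ^ d ≤ ((1 + d / c) * Real.exp (c / d * t)) ^ d := by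
          apply pow_le_pow_left₀ (by linarith) h1
      _ = (1 + d / c) ^ d * Real.exp (c / d * t) ^ d := mul_pow _ _ _
      _ = (1 + d / c) ^ d * Real.exp (c * t) := by
          rw [← Real.exp_nat_mul]
          congr 1
          field_simp

/-- Iterating the recurrence `d` times. -/
lemma aux_iter (u : ℕ → ℂ → ℂ) (C : ℕ → ℝ)
    (hrec : ∀ n z, ‖u n z‖ ≤
      C n * (1 + ‖z‖) * (‖u (n + 1) z‖ + ‖u (n + 2) z‖))
    (d n : ℕ) : ∃ D : ℝ, 0 ≤ D ∧ ∀ z : ℂ, ‖u n z‖ ≤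
      D * (1 + ‖z‖) ^ d * (‖u (n + d) z‖ + ‖u (n + d + 1) z‖) := by
  induction d with
  | zero =>
      refine ⟨1, zero_le_one, fun z => ?_⟩
      have := norm_nonneg (u (n + 1) z)
      simp only [pow_zero, Nat.add_zero]
      nlinarith
  | succ d ih =>
      obtain ⟨D, hD, h⟩ := ih
      refine ⟨D * (max (C (n + d)) 0 + 1), by positivity, fun z => ?_⟩
      set t := ‖z‖ with ht
      have ht0 : 0 ≤ t := norm_nonneg _
      have h1t : 1 ≤ 1 + t := by linarith
      have a1 : 0 ≤ ‖u (n + d + 1) z‖ := norm_nonneg _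
      have a2 : 0 ≤ ‖u (n + d + 2) z‖ := norm_nonneg _
      have hr := hrec (n + d) z
      have hC : C (n + d) ≤ max (C (n + d)) 0 := le_max_left _ _
      have hCpos : 0 ≤ max (C (n + d)) 0 := le_max_right _ _
      -- |u (n+d)| ≤ max(C,0)*(1+t)*(|u (n+d+1)|+|u (n+d+2)|)
      have hr' : ‖u (n + d) z‖ ≤
          max (C (n + d)) 0 * (1 + t) * (‖u (n + d + 1) z‖ + ‖u (n + d + 2) z‖) := by
        refine hr.trans ?_
        apply mul_le_mul_of_nonneg_right _ (by positivity)
        apply mul_le_mul_of_nonneg_right hC (by linarith)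
      have key : ‖u (n + d) z‖ + ‖u (n + d + 1) z‖ ≤
          (max (C (n + d)) 0 + 1) * (1 + t) *
            (‖u (n + d + 1) z‖ + ‖u (n + d + 2) z‖) := by
        nlinarith
      have hpow : 0 ≤ (1 + t) ^ d := by positivity
      calc ‖u n z‖
          ≤ D * (1 + t) ^ d * (‖u (n + d) z‖ + ‖u (n + d + 1) z‖) := h z
        _ ≤ D * (1 + t) ^ d * ((max (C (n + d)) 0 + 1) * (1 + t) *
              (‖u (n + d + 1) z‖ + ‖u (n + d + 2) z‖)) := by
            apply mul_le_mul_of_nonneg_left key (by positivity)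
        _ = D * (max (C (n + d)) 0 + 1) * (1 + t) ^ (d + 1) *
              (‖u (n + (d + 1)) z‖ + ‖u (n + (d + 1) + 1) z‖) := by
            show _ = _ * _ ^ (d+1) * (‖u (n + d + 1) z‖ + ‖u (n + d + 1 + 1) z‖)
            ring

/-- Minimal exponential type: if `|u_m(z)| ≤ 2 e^{ε_m |z|}` with `ε_m → 0`, and each `u_n`
satisfies the recurrence estimate `|u_n(z)| ≤ C_n (1+|z|)(|u_{n+1}(z)| + |u_{n+2}(z)|)`,
then for every `ε > 0` there is `C_n(ε)` with `|u_n(z)| ≤ C_n(ε) e^{ε|z|}` for all `z`. -/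
theorem minimal_exponential_type (u : ℕ → ℂ → ℂ) (ε : ℕ → ℝ) (C : ℕ → ℝ)
    (hε : Tendsto ε atTop (nhds 0))
    (hbd : ∀ m z, ‖u m z‖ ≤ 2 * Real.exp (ε m * ‖z‖))
    (hrec : ∀ n z, ‖u n z‖ ≤
      C n * (1 + ‖z‖) * (‖u (n + 1) z‖ + ‖u (n + 2) z‖)) :
    ∀ n : ℕ, ∀ δ : ℝ, 0 < δ → ∃ K : ℝ,
      ∀ z : ℂ, ‖u n z‖ ≤ K * Real.exp (δ * ‖z‖) := by
  intro n δ hδ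
  have hδ2 : 0 < δ / 2 := by linarith
  have hev : ∀ᶠ m in atTop, ε m < δ / 2 := hε.eventually (gt_mem_nhds hδ2)
  obtain ⟨N, hN⟩ := eventually_atTop.mp hev
  obtain ⟨D, hD, h⟩ := aux_iter u C hrec N n
  refine ⟨D * (1 + N / (δ / 2)) ^ N * 4, fun z => ?_⟩
  set t := ‖z‖ with htdef
  have ht0 : 0 ≤ t := norm_nonneg _
  have hb1 : ‖u (n + N) z‖ ≤ 2 * Real.exp ((δ / 2) * t) := by
    refine (hbd (n + N) z).trans ?_
    have : ε (n + N) * t ≤ (δ / 2) * t :=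
      mul_le_mul_of_nonneg_right (le_of_lt (hN (n + N) (Nat.le_add_left _ _))) ht0
    exact mul_le_mul_of_nonneg_left (Real.exp_le_exp.mpr this) (by norm_num)
  have hb2 : ‖u (n + N + 1) z‖ ≤ 2 * Real.exp ((δ / 2) * t) := by
    refine (hbd (n + N + 1) z).trans ?_
    have : ε (n + N + 1) * t ≤ (δ / 2) * t :=
      mul_le_mul_of_nonneg_right (le_of_lt (hN (n + N + 1) (by omega))) ht0
    exact mul_le_mul_of_nonneg_left (Real.exp_le_exp.mpr this) (by norm_num)
  have hpoly : (1 + t) ^ N ≤ (1 + N / (δ / 2)) ^ N * Real.exp ((δ / 2) * t) :=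
    aux_poly_exp (δ / 2) hδ2 N t ht0
  have hexp : 0 < Real.exp ((δ / 2) * t) := Real.exp_pos _
  have hBpos : (0:ℝ) ≤ (1 + N / (δ / 2)) ^ N := by positivity
  calc ‖u n z‖
      ≤ D * (1 + t) ^ N * (‖u (n + N) z‖ + ‖u (n + N + 1) z‖) := h z
    _ ≤ D * (1 + t) ^ N * (4 * Real.exp ((δ / 2) * t)) := by
        apply mul_le_mul_of_nonneg_left (by linarith) (by positivity)
    _ ≤ D * ((1 + N / (δ / 2)) ^ N * Real.exp ((δ / 2) * t)) * (4 * Real.exp ((δ / 2) * t)) := by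
        apply mul_le_mul_of_nonneg_right _ (by positivity)
        exact mul_le_mul_of_nonneg_left hpoly hD
    _ = D * (1 + N / (δ / 2)) ^ N * 4 * (Real.exp ((δ / 2) * t) * Real.exp ((δ / 2) * t)) := by ring
    _ = D * (1 + N / (δ / 2)) ^ N * 4 * Real.exp (δ * t) := by
        rw [← Real.exp_add]; ring_nf
end
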